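/- The clairvoyant best-case cost is monotonically non-increasing in the planning horizon: the minimum eigenvalue of 𝐂_T is greater than or equal to the minimum eigenvalue of 𝐂_{T+1}. (Corollary 1, second part.) -/

import Mathlib

open Matrix

noncomputable section

/-- Index type for stacked state / disturbance trajectories over horizon `T`:
block index in `Fin (T+1)`, coordinate in `Fin n`. -/
abbrev SIdx (n T : ℕ) := Fin (T + 1) × Fin n

/-- Index type for stacked input trajectories over horizon `T`. -/
abbrev UIdx (m T : ℕ) := Fin T × Fin m

/-- The block-downshift operator `𝐙`. -/
def Zshift (n T : ℕ) : Matrix (SIdx n T) (SIdx n T) ℝ :=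
  Matrix.of fun p q => if (p.1 : ℕ) = (q.1 : ℕ) + 1 ∧ p.2 = q.2 then (1 : ℝ) else 0

/-- `𝐀 = I_{T+1} ⊗ A`. -/
def bigA (n T : ℕ) (A : Matrix (Fin n) (Fin n) ℝ) : Matrix (SIdx n T) (SIdx n T) ℝ :=
  Matrix.of fun p q => if p.1 = q.1 then A p.2 q.2 else 0

/-- `𝐁 = col(I_T ⊗ B, 0)`. -/
def bigB (n m T : ℕ) (B : Matrix (Fin n) (Fin m) ℝ) : Matrix (SIdx n T) (UIdx m T) ℝ :=
  Matrix.of fun p q => if (p.1 : ℕ) = (q.1 : ℕ) then B p.2 q.2 else 0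

/-- `𝐐 = blkdiag(I_T ⊗ Q, 0)`. -/
def bigQ (n T : ℕ) (Q : Matrix (Fin n) (Fin n) ℝ) : Matrix (SIdx n T) (SIdx n T) ℝ :=
  Matrix.of fun p q => if p.1 = q.1 ∧ (p.1 : ℕ) < T then Q p.2 q.2 else 0

/-- `𝐑 = I_T ⊗ R`. -/
def bigR (m T : ℕ) (R : Matrix (Fin m) (Fin m) ℝ) : Matrix (UIdx m T) (UIdx m T) ℝ :=
  Matrix.of fun p q => if p.1 = q.1 then R p.2 q.2 else 0

/-- `𝐅 = (I − 𝐙𝐀)⁻¹𝐙𝐁`. -/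
def bigF (n m T : ℕ) (A : Matrix (Fin n) (Fin n) ℝ) (B : Matrix (Fin n) (Fin m) ℝ) :
    Matrix (SIdx n T) (UIdx m T) ℝ :=
  (1 - Zshift n T * bigA n T A)⁻¹ * (Zshift n T * bigB n m T B)

/-- `𝐆 = (I − 𝐙𝐀)⁻¹`. -/
def bigG (n T : ℕ) (A : Matrix (Fin n) (Fin n) ℝ) : Matrix (SIdx n T) (SIdx n T) ℝ :=
  (1 - Zshift n T * bigA n T A)⁻¹

/-- The control cost `J_T(u, δ) = xᵀ𝐐x + uᵀ𝐑u` with `x = 𝐅u + 𝐆δ`. -/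
def costJ (n m T : ℕ) (A : Matrix (Fin n) (Fin n) ℝ) (B : Matrix (Fin n) (Fin m) ℝ)
    (Q : Matrix (Fin n) (Fin n) ℝ) (R : Matrix (Fin m) (Fin m) ℝ)
    (u : UIdx m T → ℝ) (δ : SIdx n T → ℝ) : ℝ :=
  let x := bigF n m T A B *ᵥ u + bigG n T A *ᵥ δ
  x ⬝ᵥ (bigQ n T Q *ᵥ x) + u ⬝ᵥ (bigR m T R *ᵥ u)

/-- `𝐏 = 𝐑 + 𝐅ᵀ𝐐𝐅`. -/
def bigP (n m T : ℕ) (A : Matrix (Fin n) (Fin n) ℝ) (B : Matrix (Fin n) (Fin m) ℝ)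
    (Q : Matrix (Fin n) (Fin n) ℝ) (R : Matrix (Fin m) (Fin m) ℝ) :
    Matrix (UIdx m T) (UIdx m T) ℝ :=
  bigR m T R + (bigF n m T A B)ᵀ * bigQ n T Q * bigF n m T A B

/-- The clairvoyant cost matrix `𝐂_T = 𝐆ᵀ𝐐(I + 𝐅𝐑⁻¹𝐅ᵀ𝐐)⁻¹𝐆`. -/
def Cmat (n m T : ℕ) (A : Matrix (Fin n) (Fin n) ℝ) (B : Matrix (Fin n) (Fin m) ℝ)
    (Q : Matrix (Fin n) (Fin n) ℝ) (R : Matrix (Fin m) (Fin m) ℝ) :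
    Matrix (SIdx n T) (SIdx n T) ℝ :=
  (bigG n T A)ᵀ * bigQ n T Q *
    (1 + bigF n m T A B * (bigR m T R)⁻¹ * (bigF n m T A B)ᵀ * bigQ n T Q)⁻¹ * bigG n T A

/-- Assemble `δ = col(x₀, w₀, …, w_{T−1})`. -/
def assemble (n T : ℕ) (x0 : Fin n → ℝ) (w : Fin T × Fin n → ℝ) : SIdx n T → ℝ :=
  fun p => if h : (p.1 : ℕ) = 0 then x0 p.2
    else w (⟨(p.1 : ℕ) - 1, by have := p.1.isLt; omega⟩, p.2)


/-! ### Auxiliary lemmas -/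

section Aux
open scoped RealInnerProductSpace

-- dot product helpers
lemma mulVec_dot {a b : Type*} [Fintype a] [Fintype b]
    (N : Matrix a b ℝ) (c : b → ℝ) (y : a → ℝ) :
    (N *ᵥ c) ⬝ᵥ y = c ⬝ᵥ (Nᵀ *ᵥ y) := by
  rw [dotProduct_mulVec, vecMul_transpose]

lemma dot_sym {a b : Type*} [Fintype a] [Fintype b]
    (M : Matrix a b ℝ) (x : a → ℝ) (y : b → ℝ) :
    x ⬝ᵥ (M *ᵥ y) = y ⬝ᵥ (Mᵀ *ᵥ x) := by
  rw [dotProduct_comm, mulVec_dot]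

lemma mulVec_dot_mulVec {a b c : Type*} [Fintype a] [Fintype b] [Fintype c]
    (N : Matrix a b ℝ) (M : Matrix a a ℝ) (L : Matrix a c ℝ) (x : b → ℝ) (y : c → ℝ) :
    (N *ᵥ x) ⬝ᵥ (M *ᵥ (L *ᵥ y)) = x ⬝ᵥ ((Nᵀ * M * L) *ᵥ y) := by
  rw [mulVec_dot, Matrix.mulVec_mulVec, Matrix.mulVec_mulVec]

-- block diagonal quadratic forms
lemma dot_blkdiag {ι κ : Type*} [Fintype ι] [Fintype κ] [DecidableEq ι]
    (M : Matrix κ κ ℝ) (c : ι → Prop) [DecidablePred c] (x : ι × κ → ℝ) :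
    x ⬝ᵥ ((Matrix.of fun p q => if p.1 = q.1 ∧ c p.1 then M p.2 q.2 else 0 :
      Matrix (ι × κ) (ι × κ) ℝ) *ᵥ x)
      = ∑ i : ι, (if c i then (fun k => x (i, k)) ⬝ᵥ (M *ᵥ fun k => x (i, k)) else 0) := by
  simp only [dotProduct, mulVec, Matrix.of_apply, Fintype.sum_prod_type]
  refine Finset.sum_congr rfl fun i _ => ?_
  by_cases hc : c i
  · simp only [hc, if_true, ite_mul, zero_mul, and_true]
    refine Finset.sum_congr rfl fun k _ => ?_
    congr 1
    rw [Finset.sum_comm]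
    simp
  · simp [hc]

lemma blkdiag_isHermitian {ι κ : Type*} [Fintype ι] [Fintype κ] [DecidableEq ι]
    {M : Matrix κ κ ℝ} (hM : M.IsHermitian) (c : ι → Prop) [DecidablePred c] :
    (Matrix.of fun p q => if p.1 = q.1 ∧ c p.1 then M p.2 q.2 else 0 :
      Matrix (ι × κ) (ι × κ) ℝ).IsHermitian := by
  ext p q
  simp only [conjTranspose_apply, Matrix.of_apply, star_trivial]
  have hMs : M q.2 p.2 = M p.2 q.2 := by
    have := hM.apply p.2 q.2; rwa [star_trivial] at this
  by_cases h : p.1 = q.1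
  · simp [h, hMs]
  · simp [h, Ne.symm h]

lemma bigR_eq (m T : ℕ) (R : Matrix (Fin m) (Fin m) ℝ) :
    bigR m T R = Matrix.of fun p q => if p.1 = q.1 ∧ (fun _ : Fin T => True) p.1
      then R p.2 q.2 else 0 := by
  ext p q; simp [bigR]

lemma bigR_posDef {m T : ℕ} {R : Matrix (Fin m) (Fin m) ℝ} (hR : R.PosDef) :
    (bigR m T R).PosDef := by
  refine Matrix.PosDef.of_dotProduct_mulVec_pos ?_ ?_
  · rw [bigR_eq]; exact blkdiag_isHermitian hR.1 (fun _ : Fin T => True)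
  · intro x hx
    rw [star_trivial, bigR_eq, dot_blkdiag R (fun _ : Fin T => True) x]
    simp only [if_true]
    obtain ⟨⟨i, k⟩, hik⟩ := Function.ne_iff.mp hx
    refine Finset.sum_pos' (fun j _ => ?_) ⟨i, Finset.mem_univ i, ?_⟩
    · have := hR.posSemidef.dotProduct_mulVec_nonneg (fun k => x (j, k)); rwa [star_trivial] at this
    · have := hR.dotProduct_mulVec_pos (x := fun k => x (i, k)) (Function.ne_iff.mpr ⟨k, hik⟩)
      rwa [star_trivial] at this

lemma bigQ_posSemidef {n T : ℕ} {Q : Matrix (Fin n) (Fin n) ℝ} (hQ : Q.PosSemidef) :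
    (bigQ n T Q).PosSemidef := by
  refine Matrix.PosSemidef.of_dotProduct_mulVec_nonneg ?_ ?_
  · exact blkdiag_isHermitian hQ.1 (fun i : Fin (T+1) => (i : ℕ) < T)
  · intro x
    rw [star_trivial]
    rw [show bigQ n T Q = Matrix.of fun p q =>
      if p.1 = q.1 ∧ (fun i : Fin (T+1) => (i : ℕ) < T) p.1 then Q p.2 q.2 else 0 from rfl]
    rw [dot_blkdiag Q (fun i : Fin (T+1) => (i : ℕ) < T) x]
    refine Finset.sum_nonneg fun i _ => ?_
    by_cases h : (i : ℕ) < T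
    · simp only [h, if_true]
      have := hQ.dotProduct_mulVec_nonneg (fun k => x (i, k)); rwa [star_trivial] at this
    · simp [h]

-- nilpotency and invertibility of (1 - Z A)
lemma ZA_apply (n T : ℕ) (A : Matrix (Fin n) (Fin n) ℝ) (p q : SIdx n T) :
    (Zshift n T * bigA n T A) p q = if (p.1 : ℕ) = (q.1 : ℕ) + 1 then A p.2 q.2 else 0 := by
  rw [Matrix.mul_apply]
  rw [Finset.sum_eq_single (⟨q.1, p.2⟩ : SIdx n T)]
  · simp [Zshift, bigA]
  · intro r _ hr
    simp only [Zshift, bigA, Matrix.of_apply]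
    rcases eq_or_ne (p.1 : ℕ) ((r.1 : ℕ) + 1) with h1 | h1
    · rcases eq_or_ne p.2 r.2 with h2 | h2
      · rcases eq_or_ne r.1 q.1 with h3 | h3
        · exact absurd (show r = (q.1, p.2) from Prod.ext_iff.mpr ⟨h3, h2.symm⟩) hr
        · simp [h3]
      · simp [h2]
    · simp [h1]
  · intro h
    exact absurd (Finset.mem_univ _) h

lemma ZA_pow_apply (n T : ℕ) (A : Matrix (Fin n) (Fin n) ℝ) (k : ℕ) (p q : SIdx n T)
    (h : ((Zshift n T * bigA n T A) ^ k) p q ≠ 0) : (q.1 : ℕ) + k ≤ (p.1 : ℕ) := by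
  induction k generalizing p q with
  | zero =>
    simp only [pow_zero, Matrix.one_apply, ne_eq, ite_eq_right_iff, not_forall] at h
    rw [h.1]; omega
  | succ k ih =>
    rw [pow_succ, Matrix.mul_apply] at h
    obtain ⟨r, _, hr⟩ := Finset.exists_ne_zero_of_sum_ne_zero h
    have h1 := ih p r (left_ne_zero_of_mul hr)
    have h2 : (Zshift n T * bigA n T A) r q ≠ 0 := right_ne_zero_of_mul hr
    rw [ZA_apply] at h2
    have : (r.1 : ℕ) = (q.1 : ℕ) + 1 := by
      by_contra hc; simp [hc] at h2
    omega

lemma ZA_nilpotent (n T : ℕ) (A : Matrix (Fin n) (Fin n) ℝ) :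
    IsNilpotent (Zshift n T * bigA n T A) := by
  refine ⟨T + 1, ?_⟩
  ext p q
  by_contra h
  have := ZA_pow_apply n T A (T + 1) p q h
  have := p.1.isLt
  omega

lemma isUnit_one_sub_ZA (n T : ℕ) (A : Matrix (Fin n) (Fin n) ℝ) :
    IsUnit (1 - Zshift n T * bigA n T A) :=
  (ZA_nilpotent n T A).isUnit_one_sub

lemma bigG_mul (n T : ℕ) (A : Matrix (Fin n) (Fin n) ℝ) :
    bigG n T A * (1 - Zshift n T * bigA n T A) = 1 :=
  Matrix.nonsing_inv_mul _ ((Matrix.isUnit_iff_isUnit_det _).mp (isUnit_one_sub_ZA n T A))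

lemma mul_bigG (n T : ℕ) (A : Matrix (Fin n) (Fin n) ℝ) :
    (1 - Zshift n T * bigA n T A) * bigG n T A = 1 :=
  Matrix.mul_nonsing_inv _ ((Matrix.isUnit_iff_isUnit_det _).mp (isUnit_one_sub_ZA n T A))

-- abstract completion-of-squares lemmas
section Abstract
variable {s t : Type*} [Fintype s] [Fintype t] [DecidableEq s] [DecidableEq t]
variable (F : Matrix s t ℝ) (G : Matrix s s ℝ) {Qb : Matrix s s ℝ} {Rb : Matrix t t ℝ}

lemma P_posDef (hQb : Qb.PosSemidef) (hRb : Rb.PosDef) :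
    (Rb + Fᵀ * Qb * F).PosDef := by
  refine hRb.add_posSemidef ?_
  have := hQb.conjTranspose_mul_mul_same F
  rwa [conjTranspose_eq_transpose_of_trivial] at this

lemma abstract_inv (hQb : Qb.PosSemidef) (hRb : Rb.PosDef) :
    (1 + F * Rb⁻¹ * Fᵀ * Qb)⁻¹ = 1 - F * (Rb + Fᵀ * Qb * F)⁻¹ * Fᵀ * Qb := by
  have hP : (Rb + Fᵀ * Qb * F).PosDef := P_posDef F hQb hRb
  have hPP : (Rb + Fᵀ * Qb * F) * (Rb + Fᵀ * Qb * F)⁻¹ = 1 :=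
    Matrix.mul_nonsing_inv _ (isUnit_iff_ne_zero.mpr hP.det_pos.ne')
  have hRR : Rb⁻¹ * Rb = 1 := Matrix.nonsing_inv_mul _ (isUnit_iff_ne_zero.mpr hRb.det_pos.ne')
  apply Matrix.inv_eq_right_inv
  set P := Rb + Fᵀ * Qb * F with hPdef
  have h2 : Rb⁻¹ * (Fᵀ * Qb * F) * P⁻¹ = Rb⁻¹ - P⁻¹ := by
    have hS : Fᵀ * Qb * F = P - Rb := by rw [hPdef]; abel
    rw [hS, Matrix.mul_sub, hRR, Matrix.sub_mul, Matrix.mul_assoc, hPP, Matrix.mul_one,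
      Matrix.one_mul]
  set X := F * Rb⁻¹ * Fᵀ * Qb with hXdef
  set Y := F * P⁻¹ * Fᵀ * Qb with hYdef
  have hXY : X * Y = X - Y := by
    calc X * Y = F * (Rb⁻¹ * (Fᵀ * Qb * F) * P⁻¹) * (Fᵀ * Qb) := by
          rw [hXdef, hYdef]; simp only [Matrix.mul_assoc]
      _ = F * (Rb⁻¹ - P⁻¹) * (Fᵀ * Qb) := by rw [h2]
      _ = X - Y := by
          rw [Matrix.mul_sub F, Matrix.sub_mul, hXdef, hYdef]; simp only [Matrix.mul_assoc]
  have expand : (1 + X) * (1 - Y) = 1 + X - Y - X * Y := by noncomm_ring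
  rw [expand, hXY]; abel

lemma abstract_C (hQb : Qb.PosSemidef) (hRb : Rb.PosDef) :
    Gᵀ * Qb * (1 + F * Rb⁻¹ * Fᵀ * Qb)⁻¹ * G
      = Gᵀ * Qb * G - (Fᵀ * Qb * G)ᵀ * (Rb + Fᵀ * Qb * F)⁻¹ * (Fᵀ * Qb * G) := by
  rw [abstract_inv F hQb hRb]
  have hQt : Qbᵀ = Qb := hQb.1
  have h1 : Gᵀ * Qb * (1 - F * (Rb + Fᵀ * Qb * F)⁻¹ * Fᵀ * Qb) * G
      = Gᵀ * Qb * G - Gᵀ * Qb * (F * (Rb + Fᵀ * Qb * F)⁻¹ * Fᵀ * Qb) * G := by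
    rw [Matrix.mul_sub, Matrix.mul_one, Matrix.sub_mul]
  rw [h1]
  congr 1
  rw [show (Fᵀ * Qb * G)ᵀ = Gᵀ * Qbᵀ * F by
    simp only [Matrix.transpose_mul, Matrix.transpose_transpose, Matrix.mul_assoc], hQt]
  simp only [Matrix.mul_assoc]

lemma abstract_cost (hQb : Qb.PosSemidef) (hRb : Rb.PosDef) (u : t → ℝ) (δ : s → ℝ) :
    (F *ᵥ u + G *ᵥ δ) ⬝ᵥ (Qb *ᵥ (F *ᵥ u + G *ᵥ δ)) + u ⬝ᵥ (Rb *ᵥ u)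
      = δ ⬝ᵥ ((Gᵀ * Qb * (1 + F * Rb⁻¹ * Fᵀ * Qb)⁻¹ * G) *ᵥ δ)
        + (u + ((Rb + Fᵀ * Qb * F)⁻¹ * (Fᵀ * Qb * G)) *ᵥ δ)
          ⬝ᵥ ((Rb + Fᵀ * Qb * F) *ᵥ (u + ((Rb + Fᵀ * Qb * F)⁻¹ * (Fᵀ * Qb * G)) *ᵥ δ)) := by
  have hP : (Rb + Fᵀ * Qb * F).PosDef := P_posDef F hQb hRb
  have hPP : (Rb + Fᵀ * Qb * F) * (Rb + Fᵀ * Qb * F)⁻¹ = 1 :=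
    Matrix.mul_nonsing_inv _ (isUnit_iff_ne_zero.mpr hP.det_pos.ne')
  have hPt : (Rb + Fᵀ * Qb * F)ᵀ = Rb + Fᵀ * Qb * F := hP.1
  have hPit : ((Rb + Fᵀ * Qb * F)⁻¹)ᵀ = (Rb + Fᵀ * Qb * F)⁻¹ := by
    rw [Matrix.transpose_nonsing_inv, hPt]
  have hQt : Qbᵀ = Qb := hQb.1
  set P := Rb + Fᵀ * Qb * F with hPdef
  set K := Fᵀ * Qb * G with hKdef
  set w : t → ℝ := (P⁻¹ * K) *ᵥ δ with hwdef
  have hPw : P *ᵥ w = K *ᵥ δ := by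
    rw [hwdef, Matrix.mulVec_mulVec, ← Matrix.mul_assoc, hPP, Matrix.one_mul]
  have t1 : (F *ᵥ u) ⬝ᵥ (Qb *ᵥ (F *ᵥ u)) = u ⬝ᵥ ((Fᵀ * Qb * F) *ᵥ u) := mulVec_dot_mulVec ..
  have t2 : (G *ᵥ δ) ⬝ᵥ (Qb *ᵥ (F *ᵥ u)) = u ⬝ᵥ (K *ᵥ δ) := by
    rw [mulVec_dot_mulVec, dot_sym]
    rw [show (Gᵀ * Qb * F)ᵀ = Fᵀ * Qbᵀ * G by
      simp only [Matrix.transpose_mul, Matrix.transpose_transpose, Matrix.mul_assoc], hQt, ← hKdef]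
  have t3 : (F *ᵥ u) ⬝ᵥ (Qb *ᵥ (G *ᵥ δ)) = u ⬝ᵥ (K *ᵥ δ) := by
    rw [mulVec_dot_mulVec, ← hKdef]
  have t4 : (G *ᵥ δ) ⬝ᵥ (Qb *ᵥ (G *ᵥ δ)) = δ ⬝ᵥ ((Gᵀ * Qb * G) *ᵥ δ) := mulVec_dot_mulVec ..
  rw [Matrix.mulVec_add, dotProduct_add, add_dotProduct, add_dotProduct, t1, t2, t3, t4]
  have r1 : u ⬝ᵥ (P *ᵥ w) = u ⬝ᵥ (K *ᵥ δ) := by rw [hPw]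
  have r2 : w ⬝ᵥ (P *ᵥ u) = u ⬝ᵥ (K *ᵥ δ) := by rw [dot_sym, hPt, hPw]
  have r3 : w ⬝ᵥ (P *ᵥ w) = δ ⬝ᵥ ((Kᵀ * P⁻¹ * K) *ᵥ δ) := by
    rw [hPw, hwdef, mulVec_dot, Matrix.mulVec_mulVec, Matrix.transpose_mul, hPit,
      ← Matrix.mul_assoc]
  have rC : δ ⬝ᵥ ((Gᵀ * Qb * (1 + F * Rb⁻¹ * Fᵀ * Qb)⁻¹ * G) *ᵥ δ)
      = δ ⬝ᵥ ((Gᵀ * Qb * G) *ᵥ δ) - δ ⬝ᵥ ((Kᵀ * P⁻¹ * K) *ᵥ δ) := by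
    rw [abstract_C F G hQb hRb, ← hKdef, ← hPdef, Matrix.sub_mulVec, dotProduct_sub]
  rw [rC, Matrix.mulVec_add, dotProduct_add, add_dotProduct, add_dotProduct, r1, r2, r3,
    hPdef]
  have hu : u ⬝ᵥ ((Fᵀ * Qb * F) *ᵥ u) + u ⬝ᵥ (Rb *ᵥ u) = u ⬝ᵥ ((Rb + Fᵀ * Qb * F) *ᵥ u) := by
    rw [Matrix.add_mulVec, dotProduct_add]; ring
  ring_nf
  ring_nf at hu
  linarith [hu]
end Abstract

-- Rayleigh quotient lemmas
section Rayleigh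
variable {k : Type*} [Fintype k] [DecidableEq k] [Nonempty k]
variable {C : Matrix k k ℝ} (hC : C.IsHermitian)

lemma rayleigh_iInf_le (δ : k → ℝ) (hδ : δ ⬝ᵥ δ = 1) :
    (⨅ i, hC.eigenvalues i) ≤ δ ⬝ᵥ (C *ᵥ δ) := by
  set U : Matrix k k ℝ := (hC.eigenvectorUnitary : Matrix k k ℝ) with hUdef
  have hUU : U * star U = 1 := (Matrix.mem_unitaryGroup_iff).mp hC.eigenvectorUnitary.2
  have hsU : star U = Uᵀ := by
    rw [Matrix.star_eq_conjTranspose, conjTranspose_eq_transpose_of_trivial]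
  set c : k → ℝ := Uᵀ *ᵥ δ with hcdef
  have hcc : c ⬝ᵥ c = 1 := by
    rw [hcdef, mulVec_dot, Matrix.transpose_transpose, Matrix.mulVec_mulVec, ← hsU, hUU,
      Matrix.one_mulVec, hδ]
  have hform : δ ⬝ᵥ (C *ᵥ δ) = ∑ i, hC.eigenvalues i * (c i * c i) := by
    have hspec := hC.spectral_theorem
    calc δ ⬝ᵥ (C *ᵥ δ)
        = δ ⬝ᵥ ((U * diagonal (RCLike.ofReal ∘ hC.eigenvalues) * star U) *ᵥ δ) := by
          rw [← show C = U * diagonal (RCLike.ofReal ∘ hC.eigenvalues) * star U from hspec]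
      _ = c ⬝ᵥ (diagonal (RCLike.ofReal ∘ hC.eigenvalues) *ᵥ c) := by
          rw [hsU, Matrix.mul_assoc, ← Matrix.mulVec_mulVec, dotProduct_mulVec,
            ← Matrix.transpose_transpose U, Matrix.vecMul_transpose, Matrix.transpose_transpose,
            hcdef, Matrix.mulVec_mulVec]
      _ = ∑ i, hC.eigenvalues i * (c i * c i) := by
          simp only [dotProduct, Matrix.mulVec_diagonal, Function.comp_apply]
          exact Finset.sum_congr rfl fun i _ => by rw [RCLike.ofReal_real_eq_id]; simp; ring
  rw [hform]
  have hbdd : BddBelow (Set.range hC.eigenvalues) := (Set.finite_range _).bddBelow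
  calc (⨅ i, hC.eigenvalues i)
      = (⨅ i, hC.eigenvalues i) * (c ⬝ᵥ c) := by rw [hcc, mul_one]
    _ = ∑ i, (⨅ j, hC.eigenvalues j) * (c i * c i) := by
        rw [dotProduct, Finset.mul_sum]
    _ ≤ ∑ i, hC.eigenvalues i * (c i * c i) := by
        refine Finset.sum_le_sum fun i _ => ?_
        exact mul_le_mul_of_nonneg_right (ciInf_le hbdd i) (mul_self_nonneg _)

lemma rayleigh_exists_min :
    ∃ δ : k → ℝ, δ ⬝ᵥ δ = 1 ∧ δ ⬝ᵥ (C *ᵥ δ) = ⨅ i, hC.eigenvalues i := by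
  obtain ⟨i₀, hi₀⟩ := Finite.exists_min hC.eigenvalues
  have hinf : (⨅ i, hC.eigenvalues i) = hC.eigenvalues i₀ :=
    le_antisymm (ciInf_le ((Set.finite_range _).bddBelow) i₀) (le_ciInf hi₀)
  refine ⟨⇑(hC.eigenvectorBasis i₀), ?_, ?_⟩
  · have hnorm : ‖hC.eigenvectorBasis i₀‖ = 1 := hC.eigenvectorBasis.orthonormal.1 i₀
    have : (⟪hC.eigenvectorBasis i₀, hC.eigenvectorBasis i₀⟫) = 1 := by
      rw [real_inner_self_eq_norm_mul_norm, hnorm, mul_one]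
    rw [← this]
    exact (EuclideanSpace.inner_eq_star_dotProduct _ _).symm
  · rw [hC.mulVec_eigenvectorBasis, hinf]
    have hnorm : ‖hC.eigenvectorBasis i₀‖ = 1 := hC.eigenvectorBasis.orthonormal.1 i₀
    have h1 : (⟪hC.eigenvectorBasis i₀, hC.eigenvectorBasis i₀⟫) = 1 := by
      rw [real_inner_self_eq_norm_mul_norm, hnorm, mul_one]
    have h2 : ⇑(hC.eigenvectorBasis i₀) ⬝ᵥ ⇑(hC.eigenvectorBasis i₀) = 1 := by
      rw [← h1]; exact (EuclideanSpace.inner_eq_star_dotProduct _ _).symm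
    rw [dotProduct_smul, h2]
    simp
end Rayleigh

-- trajectory characterization and horizon shifting
lemma ZB_apply (n m T : ℕ) (B : Matrix (Fin n) (Fin m) ℝ) (p : SIdx n T) (q : UIdx m T) :
    (Zshift n T * bigB n m T B) p q = if (p.1 : ℕ) = (q.1 : ℕ) + 1 then B p.2 q.2 else 0 := by
  rw [Matrix.mul_apply]
  rcases eq_or_ne (p.1 : ℕ) ((q.1 : ℕ) + 1) with h1 | h1
  · have hq1 : ((q.1 : ℕ) : ℕ) < T + 1 := by have := q.1.isLt; omega
    rw [Finset.sum_eq_single (⟨⟨(q.1 : ℕ), hq1⟩, p.2⟩ : SIdx n T)]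
    · simp [Zshift, bigB, h1]
    · intro r _ hr
      simp only [Zshift, bigB, Matrix.of_apply]
      rcases eq_or_ne (p.1 : ℕ) ((r.1 : ℕ) + 1) with h2 | h2
      · rcases eq_or_ne p.2 r.2 with h3 | h3
        · have : r = (⟨⟨(q.1 : ℕ), hq1⟩, p.2⟩ : SIdx n T) := by
            refine Prod.ext_iff.mpr ⟨?_, h3.symm⟩
            apply Fin.ext; simp; omega
          exact absurd this hr
        · simp [h3]
      · simp [h2]
    · intro h; exact absurd (Finset.mem_univ _) h
  · rw [if_neg h1]
    apply Finset.sum_eq_zero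
    intro r _
    simp only [Zshift, bigB, Matrix.of_apply]
    rcases eq_or_ne (p.1 : ℕ) ((r.1 : ℕ) + 1) with h2 | h2
    · rcases eq_or_ne ((r.1 : ℕ)) ((q.1 : ℕ)) with h3 | h3
      · omega
      · simp [h3]
    · simp [h2]

lemma ZA_mulVec (n T : ℕ) (A : Matrix (Fin n) (Fin n) ℝ) (v : SIdx n T → ℝ) (p : SIdx n T) :
    ((Zshift n T * bigA n T A) *ᵥ v) p
      = if h : (p.1 : ℕ) = 0 then 0
        else ∑ j, A p.2 j * v (⟨(p.1 : ℕ) - 1, by have := p.1.isLt; omega⟩, j) := by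
  rw [Matrix.mulVec, dotProduct]
  by_cases h : (p.1 : ℕ) = 0
  · rw [dif_pos h]
    apply Finset.sum_eq_zero
    intro q _
    rw [ZA_apply]
    have : ¬((p.1 : ℕ) = (q.1 : ℕ) + 1) := by omega
    simp [this]
  · rw [dif_neg h, Fintype.sum_prod_type]
    rw [Finset.sum_eq_single (⟨(p.1 : ℕ) - 1, by have := p.1.isLt; omega⟩ : Fin (T + 1))]
    · refine Finset.sum_congr rfl fun j _ => ?_
      rw [ZA_apply]
      have : (p.1 : ℕ) = (((⟨(p.1 : ℕ) - 1, by have := p.1.isLt; omega⟩ : Fin (T + 1))) : ℕ) + 1 := by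
        simp; omega
      rw [if_pos this]
    · intro r _ hr
      apply Finset.sum_eq_zero
      intro j _
      rw [ZA_apply]
      have : ¬((p.1 : ℕ) = (r : ℕ) + 1) := by
        intro hc
        apply hr; apply Fin.ext; simp; omega
      simp [this]
    · intro h; exact absurd (Finset.mem_univ _) h

lemma ZB_mulVec (n m T : ℕ) (B : Matrix (Fin n) (Fin m) ℝ) (u : UIdx m T → ℝ) (p : SIdx n T) :
    ((Zshift n T * bigB n m T B) *ᵥ u) p
      = if h : (p.1 : ℕ) = 0 then 0
        else ∑ j, B p.2 j * u (⟨(p.1 : ℕ) - 1, by have := p.1.isLt; omega⟩, j) := by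
  rw [Matrix.mulVec, dotProduct]
  by_cases h : (p.1 : ℕ) = 0
  · rw [dif_pos h]
    apply Finset.sum_eq_zero
    intro q _
    rw [ZB_apply]
    have : ¬((p.1 : ℕ) = (q.1 : ℕ) + 1) := by omega
    simp [this]
  · rw [dif_neg h, Fintype.sum_prod_type]
    rw [Finset.sum_eq_single (⟨(p.1 : ℕ) - 1, by have := p.1.isLt; omega⟩ : Fin T)]
    · refine Finset.sum_congr rfl fun j _ => ?_
      rw [ZB_apply]
      have : (p.1 : ℕ) = (((⟨(p.1 : ℕ) - 1, by have := p.1.isLt; omega⟩ : Fin T)) : ℕ) + 1 := by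
        simp; omega
      rw [if_pos this]
    · intro r _ hr
      apply Finset.sum_eq_zero
      intro j _
      rw [ZB_apply]
      have : ¬((p.1 : ℕ) = (r : ℕ) + 1) := by
        intro hc
        apply hr; apply Fin.ext; simp; omega
      simp [this]
    · intro h; exact absurd (Finset.mem_univ _) h

lemma mulVec_char (n m T : ℕ) (A : Matrix (Fin n) (Fin n) ℝ) (B : Matrix (Fin n) (Fin m) ℝ)
    (u : UIdx m T → ℝ) (δ y : SIdx n T → ℝ) :
    y = bigF n m T A B *ᵥ u + bigG n T A *ᵥ δ ↔
      ∀ p : SIdx n T, y p =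
        (if h : (p.1 : ℕ) = 0 then 0
          else (∑ j, A p.2 j * y (⟨(p.1 : ℕ) - 1, by have := p.1.isLt; omega⟩, j))
            + ∑ j, B p.2 j * u (⟨(p.1 : ℕ) - 1, by have := p.1.isLt; omega⟩, j)) + δ p := by
  have step1 : y = bigF n m T A B *ᵥ u + bigG n T A *ᵥ δ ↔
      (1 - Zshift n T * bigA n T A) *ᵥ y = (Zshift n T * bigB n m T B) *ᵥ u + δ := by
    have hGGinv : (1 - Zshift n T * bigA n T A) * (1 - Zshift n T * bigA n T A)⁻¹ = 1 :=
      mul_bigG n T A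
    have hGinv : (1 - Zshift n T * bigA n T A)⁻¹ * (1 - Zshift n T * bigA n T A) = 1 :=
      bigG_mul n T A
    constructor
    · intro hy
      rw [hy, Matrix.mulVec_add, Matrix.mulVec_mulVec, Matrix.mulVec_mulVec]
      simp only [bigF, bigG]
      rw [← Matrix.mul_assoc, hGGinv, Matrix.one_mul, Matrix.one_mulVec]
    · intro hy
      have h2 : y = ((1 - Zshift n T * bigA n T A)⁻¹ * (1 - Zshift n T * bigA n T A)) *ᵥ y := by
        rw [hGinv, Matrix.one_mulVec]
      rw [h2, ← Matrix.mulVec_mulVec, hy, Matrix.mulVec_add, Matrix.mulVec_mulVec]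
      rfl
  rw [step1, funext_iff]
  apply forall_congr'
  intro p
  rw [Matrix.sub_mulVec, Matrix.one_mulVec, Pi.sub_apply, Pi.add_apply,
    ZA_mulVec, ZB_mulVec]
  by_cases h : (p.1 : ℕ) = 0
  · rw [dif_pos h, dif_pos h, dif_pos h]
    constructor <;> intro h' <;> linarith
  · rw [dif_neg h, dif_neg h, dif_neg h]
    constructor <;> intro h' <;> linarith

def ushift (m T : ℕ) (u : UIdx m T → ℝ) : UIdx m (T + 1) → ℝ :=
  fun p => if h : (p.1 : ℕ) = 0 then 0
    else u (⟨(p.1 : ℕ) - 1, by have := p.1.isLt; omega⟩, p.2)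

lemma shift_traj (n m T : ℕ) (A : Matrix (Fin n) (Fin n) ℝ) (B : Matrix (Fin n) (Fin m) ℝ)
    (u : UIdx m T → ℝ) (δ : SIdx n T → ℝ) :
    assemble n (T + 1) (fun _ => 0) (bigF n m T A B *ᵥ u + bigG n T A *ᵥ δ)
      = bigF n m (T + 1) A B *ᵥ ushift m T u
        + bigG n (T + 1) A *ᵥ assemble n (T + 1) (fun _ => 0) δ := by
  set x := bigF n m T A B *ᵥ u + bigG n T A *ᵥ δ with hxdef
  have hx := (mulVec_char n m T A B u δ x).mp rfl
  apply (mulVec_char n m (T + 1) A B (ushift m T u) (assemble n (T + 1) (fun _ => 0) δ)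
    (assemble n (T + 1) (fun _ => 0) x)).mpr
  rintro ⟨p1, k⟩
  by_cases h0 : (p1 : ℕ) = 0
  · simp [assemble, h0]
  · have lt1 : (p1 : ℕ) - 1 < T + 1 := by have := p1.isLt; omega
    have hxq := hx (⟨(p1 : ℕ) - 1, lt1⟩, k)
    by_cases h1 : (p1 : ℕ) - 1 = 0
    · simp only [assemble, ushift, dif_neg h0] at hxq ⊢
      simp only [dif_pos h1, mul_zero, Finset.sum_const_zero, add_zero, zero_add] at hxq ⊢
      exact hxq
    · simp only [assemble, ushift, dif_neg h0] at hxq ⊢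
      simp only [dif_neg h1] at hxq ⊢
      exact hxq

lemma assemble_zero (n T : ℕ) (x0 : Fin n → ℝ) (v : SIdx n T → ℝ) (k : Fin n) :
    assemble n (T + 1) x0 v ((0 : Fin (T + 2)), k) = x0 k := by
  simp [assemble]

lemma assemble_succ (n T : ℕ) (x0 : Fin n → ℝ) (v : SIdx n T → ℝ) (i : Fin (T + 1)) (k : Fin n) :
    assemble n (T + 1) x0 v (i.succ, k) = v (i, k) := by
  have h : ((i.succ : Fin (T + 2)) : ℕ) ≠ 0 := by simp [Fin.val_succ]
  simp only [assemble, dif_neg h]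
  exact congrArg v (Prod.ext_iff.mpr ⟨Fin.ext (by simp [Fin.val_succ]), rfl⟩)

lemma ushift_zero (m T : ℕ) (u : UIdx m T → ℝ) (k : Fin m) :
    ushift m T u ((0 : Fin (T + 1)), k) = 0 := by
  simp [ushift]

lemma ushift_succ (m T : ℕ) (u : UIdx m T → ℝ) (i : Fin T) (k : Fin m) :
    ushift m T u (i.succ, k) = u (i, k) := by
  have h : ((i.succ : Fin (T + 1)) : ℕ) ≠ 0 := by simp [Fin.val_succ]
  simp only [ushift, dif_neg h]
  exact congrArg u (Prod.ext_iff.mpr ⟨Fin.ext (by simp [Fin.val_succ]), rfl⟩)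

lemma shift_dot (n T : ℕ) (v : SIdx n T → ℝ) :
    (assemble n (T + 1) (fun _ => 0) v) ⬝ᵥ (assemble n (T + 1) (fun _ => 0) v) = v ⬝ᵥ v := by
  simp only [dotProduct, Fintype.sum_prod_type]
  rw [Fin.sum_univ_succ]
  simp only [assemble_zero, assemble_succ, mul_zero, Finset.sum_const_zero, zero_add]

lemma shift_cost (n m T : ℕ) (A : Matrix (Fin n) (Fin n) ℝ) (B : Matrix (Fin n) (Fin m) ℝ)
    (Q : Matrix (Fin n) (Fin n) ℝ) (R : Matrix (Fin m) (Fin m) ℝ)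
    (u : UIdx m T → ℝ) (δ : SIdx n T → ℝ) :
    costJ n m (T + 1) A B Q R (ushift m T u) (assemble n (T + 1) (fun _ => 0) δ)
      = costJ n m T A B Q R u δ := by
  simp only [costJ]
  rw [← shift_traj]
  set x := bigF n m T A B *ᵥ u + bigG n T A *ᵥ δ with hxdef
  have hQpart : (assemble n (T + 1) (fun _ => 0) x) ⬝ᵥ
      (bigQ n (T + 1) Q *ᵥ assemble n (T + 1) (fun _ => 0) x) = x ⬝ᵥ (bigQ n T Q *ᵥ x) := by
    rw [show bigQ n (T + 1) Q = Matrix.of (fun p q =>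
        if p.1 = q.1 ∧ ((fun i : Fin (T + 2) => (i : ℕ) < T + 1) p.1) then Q p.2 q.2 else 0)
      from rfl, dot_blkdiag Q (fun i : Fin (T + 2) => (i : ℕ) < T + 1)]
    rw [show bigQ n T Q = Matrix.of (fun p q =>
        if p.1 = q.1 ∧ ((fun i : Fin (T + 1) => (i : ℕ) < T) p.1) then Q p.2 q.2 else 0)
      from rfl, dot_blkdiag Q (fun i : Fin (T + 1) => (i : ℕ) < T)]
    rw [Fin.sum_univ_succ]
    have h0 : ((0 : Fin (T + 2)) : ℕ) < T + 1 := by simp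
    rw [if_pos h0]
    have hz : (fun k => assemble n (T + 1) (fun _ => 0) x ((0 : Fin (T + 2)), k))
        = (0 : Fin n → ℝ) := by
      funext k; exact assemble_zero n T (fun _ => 0) x k
    rw [hz, Matrix.mulVec_zero, dotProduct_zero, zero_add]
    refine Finset.sum_congr rfl fun i _ => ?_
    have hc : (((i.succ : Fin (T + 2)) : ℕ) < T + 1) ↔ ((i : ℕ) < T) := by
      simp [Fin.val_succ]
    have hs : (fun k => assemble n (T + 1) (fun _ => 0) x (i.succ, k))
        = (fun k => x (i, k)) := by
      funext k; exact assemble_succ n T (fun _ => 0) x i k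
    by_cases h : (i : ℕ) < T
    · rw [if_pos (hc.mpr h), if_pos h, hs]
    · rw [if_neg (fun hh => h (hc.mp hh)), if_neg h]
  have hRpart : (ushift m T u) ⬝ᵥ (bigR m (T + 1) R *ᵥ ushift m T u)
      = u ⬝ᵥ (bigR m T R *ᵥ u) := by
    rw [show bigR m (T + 1) R = Matrix.of (fun p q =>
        if p.1 = q.1 ∧ ((fun _ : Fin (T + 1) => True) p.1) then R p.2 q.2 else 0)
      from (by ext p q; simp [bigR]), dot_blkdiag R (fun _ : Fin (T + 1) => True)]
    rw [show bigR m T R = Matrix.of (fun p q =>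
        if p.1 = q.1 ∧ ((fun _ : Fin T => True) p.1) then R p.2 q.2 else 0)
      from (by ext p q; simp [bigR]), dot_blkdiag R (fun _ : Fin T => True)]
    simp only [if_true]
    rw [Fin.sum_univ_succ]
    have hz : (fun k => ushift m T u ((0 : Fin (T + 1)), k)) = (0 : Fin m → ℝ) := by
      funext k; exact ushift_zero m T u k
    rw [hz, Matrix.mulVec_zero, dotProduct_zero, zero_add]
    refine Finset.sum_congr rfl fun i _ => ?_
    have hs : (fun k => ushift m T u (i.succ, k)) = (fun k => u (i, k)) := by
      funext k; exact ushift_succ m T u i k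
    rw [hs]
  rw [hQpart, hRpart]

-- cost decomposition specialized to the controller matrices
lemma cost_decomp (n m T : ℕ) (A : Matrix (Fin n) (Fin n) ℝ) (B : Matrix (Fin n) (Fin m) ℝ)
    {Q : Matrix (Fin n) (Fin n) ℝ} {R : Matrix (Fin m) (Fin m) ℝ}
    (hQ : Q.PosSemidef) (hR : R.PosDef) (u : UIdx m T → ℝ) (δ : SIdx n T → ℝ) :
    costJ n m T A B Q R u δ
      = δ ⬝ᵥ (Cmat n m T A B Q R *ᵥ δ)
        + (u + ((bigR m T R + (bigF n m T A B)ᵀ * bigQ n T Q * bigF n m T A B)⁻¹ *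
            ((bigF n m T A B)ᵀ * bigQ n T Q * bigG n T A)) *ᵥ δ)
          ⬝ᵥ ((bigR m T R + (bigF n m T A B)ᵀ * bigQ n T Q * bigF n m T A B) *ᵥ
            (u + ((bigR m T R + (bigF n m T A B)ᵀ * bigQ n T Q * bigF n m T A B)⁻¹ *
              ((bigF n m T A B)ᵀ * bigQ n T Q * bigG n T A)) *ᵥ δ)) := by
  simp only [costJ, Cmat]
  exact abstract_cost (bigF n m T A B) (bigG n T A) (bigQ_posSemidef hQ) (bigR_posDef hR) u δ

lemma cost_ge (n m T : ℕ) (A : Matrix (Fin n) (Fin n) ℝ) (B : Matrix (Fin n) (Fin m) ℝ)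
    {Q : Matrix (Fin n) (Fin n) ℝ} {R : Matrix (Fin m) (Fin m) ℝ}
    (hQ : Q.PosSemidef) (hR : R.PosDef) (u : UIdx m T → ℝ) (δ : SIdx n T → ℝ) :
    δ ⬝ᵥ (Cmat n m T A B Q R *ᵥ δ) ≤ costJ n m T A B Q R u δ := by
  rw [cost_decomp n m T A B hQ hR u δ]
  have hP : (bigR m T R + (bigF n m T A B)ᵀ * bigQ n T Q * bigF n m T A B).PosDef :=
    P_posDef (bigF n m T A B) (bigQ_posSemidef hQ) (bigR_posDef hR)
  have := hP.posSemidef.dotProduct_mulVec_nonneg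
    (u + ((bigR m T R + (bigF n m T A B)ᵀ * bigQ n T Q * bigF n m T A B)⁻¹ *
      ((bigF n m T A B)ᵀ * bigQ n T Q * bigG n T A)) *ᵥ δ)
  rw [star_trivial] at this
  linarith

lemma cost_opt (n m T : ℕ) (A : Matrix (Fin n) (Fin n) ℝ) (B : Matrix (Fin n) (Fin m) ℝ)
    {Q : Matrix (Fin n) (Fin n) ℝ} {R : Matrix (Fin m) (Fin m) ℝ}
    (hQ : Q.PosSemidef) (hR : R.PosDef) (δ : SIdx n T → ℝ) :
    costJ n m T A B Q R
      (-(((bigR m T R + (bigF n m T A B)ᵀ * bigQ n T Q * bigF n m T A B)⁻¹ *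
        ((bigF n m T A B)ᵀ * bigQ n T Q * bigG n T A)) *ᵥ δ)) δ
      = δ ⬝ᵥ (Cmat n m T A B Q R *ᵥ δ) := by
  rw [cost_decomp n m T A B hQ hR _ δ, neg_add_cancel]
  simp

end Aux

/-- Corollary 1, second part: the minimum eigenvalue of `𝐂_T` is monotonically
non-increasing in the planning horizon. -/
theorem stmt9 (n m T : ℕ) (hn : 0 < n) (hm : 0 < m) (hT : 1 ≤ T)
    (A : Matrix (Fin n) (Fin n) ℝ) (B : Matrix (Fin n) (Fin m) ℝ)
    (Q : Matrix (Fin n) (Fin n) ℝ) (R : Matrix (Fin m) (Fin m) ℝ)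
    (hQ : Q.PosSemidef) (hR : R.PosDef)
    (hCT : (Cmat n m T A B Q R).IsHermitian)
    (hCT1 : (Cmat n m (T + 1) A B Q R).IsHermitian) :
    (⨅ i : SIdx n (T + 1), hCT1.eigenvalues i) ≤ ⨅ i : SIdx n T, hCT.eigenvalues i := by
  haveI : Nonempty (Fin n) := ⟨⟨0, hn⟩⟩
  obtain ⟨δ, hδ1, hδ2⟩ := rayleigh_exists_min hCT
  set δ' : SIdx n (T + 1) → ℝ := assemble n (T + 1) (fun _ => 0) δ with hδ'def
  have hδ'1 : δ' ⬝ᵥ δ' = 1 := by rw [hδ'def, shift_dot]; exact hδ1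
  set ustar : UIdx m T → ℝ :=
    -(((bigR m T R + (bigF n m T A B)ᵀ * bigQ n T Q * bigF n m T A B)⁻¹ *
      ((bigF n m T A B)ᵀ * bigQ n T Q * bigG n T A)) *ᵥ δ) with hustar
  calc (⨅ i : SIdx n (T + 1), hCT1.eigenvalues i)
      ≤ δ' ⬝ᵥ (Cmat n m (T + 1) A B Q R *ᵥ δ') := rayleigh_iInf_le hCT1 δ' hδ'1
    _ ≤ costJ n m (T + 1) A B Q R (ushift m T ustar) δ' :=
        cost_ge n m (T + 1) A B hQ hR _ δ'
    _ = costJ n m T A B Q R ustar δ := by rw [hδ'def, shift_cost]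
    _ = δ ⬝ᵥ (Cmat n m T A B Q R *ᵥ δ) := cost_opt n m T A B hQ hR δ
    _ = ⨅ i : SIdx n T, hCT.eigenvalues i := hδ2

end
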